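/- Let q be an odd prime and k ≥ 1 a natural number. Let S = {s_1, …, s_ℓ} be a finite set of nonzero integers, none of which is a perfect q-th power, and let a_1, …, a_ℓ ∈ {1, …, q−1}. Then S belongs to 𝒯_{k,q} if and only if the set {s_1^{a_1}, …, s_ℓ^{a_ℓ}} belongs to 𝒯_{k,q}. -/
import Mathlib


open Finset

/-- `S ∈ 𝒯_{k,q}`: there is a positive integer `Δ` such that for every natural number `N`
with `Ω(N) ≤ k` and `gcd(N, Δ) = 1`, some `s ∈ S` is a `q`-th power modulo `N`. -/
def MemT (q k : ℕ) (S : Set ℤ) : Prop :=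
  ∃ Δ : ℕ, 0 < Δ ∧ ∀ N : ℕ, 0 < N → N.primeFactorsList.length ≤ k → Nat.Coprime N Δ →
    ∃ s ∈ S, ∃ x : ℤ, (N : ℤ) ∣ x ^ q - s

/-- `s` is a perfect `q`-th power of an integer. -/
def IsPerfectPow (q : ℕ) (s : ℤ) : Prop := ∃ r : ℤ, r ^ q = s

/-- The finite set of primes dividing `∏_{s ∈ S} rad_q(|s|)`, i.e. the primes `p` such that
`q ∤ v_p(|s|)` for some `s ∈ S`. -/
def qPrimes (q : ℕ) (S : Finset ℤ) : Finset ℕ :=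
  S.sup fun s => s.natAbs.primeFactors.filter fun p => ¬ q ∣ s.natAbs.factorization p

/-- The vector `(v_{p_1}(|u|) mod q, …, v_{p_n}(|u|) mod q)` where `p_1 < … < p_n`
is the increasing enumeration of the finite set of primes `P`. -/
def vecOf (q : ℕ) (P : Finset ℕ) (u : ℤ) : Fin P.card → ZMod q :=
  fun i => ((u.natAbs.factorization (P.orderIsoOfFin rfl i).1 : ℕ) : ZMod q)

/-- The projective point `⟨v⟩` of `PG(F_q^n)` spanned by a vector `v`. -/
def projPoint {q n : ℕ} (v : Fin n → ZMod q) : Submodule (ZMod q) (Fin n → ZMod q) :=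
  Submodule.span (ZMod q) {v}

/-- The set of projective points associated with `S` in `PG(F_q^n)`,
`n` being the number of distinct primes dividing `∏_{s ∈ S} rad_q(|s|)`. -/
def assocPoints (q : ℕ) (S : Finset ℤ) :
    Set (Submodule (ZMod q) (Fin (qPrimes q S).card → ZMod q)) :=
  {P | ∃ s ∈ S, P = projPoint (vecOf q (qPrimes q S) s)}

/-- `B` is a `k`-blocking set of `PG(F_q^n)`: every subspace of codimension `k`
contains a nonzero vector spanning a point of `B`. -/
def IsBlockingSet (q n k : ℕ) (B : Set (Submodule (ZMod q) (Fin n → ZMod q))) : Prop :=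
  ∀ W : Submodule (ZMod q) (Fin n → ZMod q), Module.finrank (ZMod q) W = n - k →
    ∃ v ∈ W, v ≠ 0 ∧ projPoint v ∈ B

/-- `B` is (the point set of) a `k`-space of `PG(F_q^n)`. -/
def IsKSpace (q n k : ℕ) (B : Set (Submodule (ZMod q) (Fin n → ZMod q))) : Prop :=
  ∃ W : Submodule (ZMod q) (Fin n → ZMod q), Module.finrank (ZMod q) W = k + 1 ∧
    B = {P | ∃ v ∈ W, v ≠ 0 ∧ P = projPoint v}

/-- `S` and `T` are geometrically `q`-equivalent: some element of `PGL(n, q)` maps the point set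
associated with `S` onto the point set associated with `T`, where the points are computed with
respect to all the primes dividing `(∏_{s ∈ S} rad_q(|s|)) ⬝ (∏_{t ∈ T} rad_q(|t|))`. -/
def GeomEquiv (q : ℕ) (S T : Finset ℤ) : Prop :=
  ∃ Ψ : (Fin (qPrimes q (S ∪ T)).card → ZMod q) ≃ₗ[ZMod q]
        (Fin (qPrimes q (S ∪ T)).card → ZMod q),
    (Submodule.map Ψ.toLinearMap) ''
        {P | ∃ s ∈ S, P = projPoint (vecOf q (qPrimes q (S ∪ T)) s)} =
      {P | ∃ t ∈ T, P = projPoint (vecOf q (qPrimes q (S ∪ T)) t)}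

/-- The set of squares of `F_qˣ` together with `0`. -/
def Q0 (q : ℕ) : Set (ZMod q) := {x | (∃ a : ZMod q, a ≠ 0 ∧ a ^ 2 = x) ∨ x = 0}

private lemma aux_descent (q n N : ℕ) (hq : q.Prime) (hn1 : 1 ≤ n) (hn2 : n < q)
    (hN : 0 < N) (s x : ℤ) (hs : IsUnit ((s : ZMod N)))
    (h : (N : ℤ) ∣ x ^ q - s ^ n) : ∃ y : ℤ, (N : ℤ) ∣ y ^ q - s := by
  haveI : NeZero N := ⟨hN.ne'⟩
  have hcop : Nat.Coprime n q := by
    refine (Nat.coprime_comm.mp (hq.coprime_iff_not_dvd.mpr ?_))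
    intro hdvd
    exact absurd (Nat.le_of_dvd hn1 hdvd) (by omega)
  have hφ : 1 ≤ Nat.totient q := Nat.totient_pos.mpr hq.pos
  have heuler : n ^ Nat.totient q ≡ 1 [MOD q] := Nat.ModEq.pow_totient hcop
  have hpow1 : 1 ≤ n ^ Nat.totient q := Nat.one_le_pow _ _ hn1
  obtain ⟨m, hm⟩ : q ∣ n ^ Nat.totient q - 1 := (Nat.modEq_iff_dvd' hpow1).mp heuler.symm
  have hnb : n * n ^ (Nat.totient q - 1) = 1 + q * m := by
    have h1 : n * n ^ (Nat.totient q - 1) = n ^ Nat.totient q := by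
      rw [← pow_succ']
      congr 1
      omega
    omega
  set b := n ^ (Nat.totient q - 1) with hb
  have hzero : ((x ^ q - s ^ n : ℤ) : ZMod N) = 0 :=
    (ZMod.intCast_zmod_eq_zero_iff_dvd _ _).mpr h
  push_cast at hzero
  have hXq : (x : ZMod N) ^ q = (s : ZMod N) ^ n := by linear_combination hzero
  obtain ⟨u, hu⟩ := hs
  have hXu : IsUnit ((x : ZMod N)) := by
    rw [← isUnit_pow_iff hq.ne_zero (a := (x : ZMod N)), hXq, ← hu]
    exact (u ^ n).isUnit
  obtain ⟨U, hU⟩ := hXu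
  have hUq : U ^ q = u ^ n := by
    ext
    rw [Units.val_pow_eq_pow_val, Units.val_pow_eq_pow_val, hU, hu, hXq]
  have key : (U ^ b * u⁻¹ ^ m) ^ q = u := by
    have h1 : (U ^ b) ^ q = u * u ^ (q * m) := by
      rw [← pow_mul, mul_comm b q, pow_mul, hUq, ← pow_mul, hnb, pow_add, pow_one]
    rw [mul_pow, h1, ← pow_mul, inv_pow, mul_comm m q, mul_assoc]
    simp
  set z : ZMod N := ((U ^ b * u⁻¹ ^ m : (ZMod N)ˣ) : ZMod N) with hz
  have hzq : z ^ q = (s : ZMod N) := by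
    rw [hz, ← Units.val_pow_eq_pow_val, key, hu]
  refine ⟨(z.val : ℤ), ?_⟩
  rw [← ZMod.intCast_zmod_eq_zero_iff_dvd, Int.cast_sub, Int.cast_pow, Int.cast_natCast,
    ZMod.natCast_rightInverse z, hzq, sub_self]

/-- **Corollary (invariance under exponentiation).** For `a_s ∈ {1, …, q-1}`,
`S ∈ 𝒯_{k,q}` iff `{s^{a_s} : s ∈ S} ∈ 𝒯_{k,q}`. -/
theorem stmt3 (q k : ℕ) (hq : q.Prime) (hodd : Odd q) (hk : 1 ≤ k)
    (S : Finset ℤ) (hS0 : ∀ s ∈ S, s ≠ 0) (hSpow : ∀ s ∈ S, ¬ IsPerfectPow q s)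
    (a : ℤ → ℕ) (ha : ∀ s ∈ S, 1 ≤ a s ∧ a s ≤ q - 1) :
    MemT q k ↑S ↔ MemT q k ↑(S.image fun s => s ^ a s) := by
  constructor
  · rintro ⟨Δ, hΔ, hT⟩
    refine ⟨Δ, hΔ, fun N hN hΩ hco => ?_⟩
    obtain ⟨s, hsS, x, hx⟩ := hT N hN hΩ hco
    refine ⟨s ^ a s, by simpa using Finset.mem_image_of_mem _ hsS, x ^ a s, ?_⟩
    have h1 : (x ^ q - s) ∣ (x ^ q) ^ a s - s ^ a s := sub_dvd_pow_sub_pow _ _ _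
    rw [← pow_mul, mul_comm, pow_mul] at h1
    exact hx.trans h1
  · rintro ⟨Δ, hΔ, hT⟩
    refine ⟨Δ * (S.prod fun s => s.natAbs),
      Nat.mul_pos hΔ (Finset.prod_pos fun s hs => Int.natAbs_pos.mpr (hS0 s hs)),
      fun N hN hΩ hco => ?_⟩
    have hco1 : N.Coprime Δ := Nat.Coprime.coprime_dvd_right (dvd_mul_right _ _) hco
    obtain ⟨t, htmem, x, hx⟩ := hT N hN hΩ hco1
    simp only [Finset.coe_image, Set.mem_image, Finset.mem_coe] at htmem
    obtain ⟨s, hsS, rfl⟩ := htmem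
    have hcops : N.Coprime s.natAbs :=
      (Nat.Coprime.coprime_dvd_right (dvd_mul_left _ _) hco).coprime_dvd_right
        (Finset.dvd_prod_of_mem _ hsS)
    have hsu : IsUnit ((s : ZMod N)) := by
      have h1 : IsUnit ((s.natAbs : ℕ) : ZMod N) :=
        (ZMod.isUnit_iff_coprime _ _).mpr hcops.symm
      rcases Int.natAbs_eq s with h | h
      · rw [h, Int.cast_natCast]; exact h1
      · rw [h, Int.cast_neg, Int.cast_natCast]; exact h1.neg
    have hlt : a s < q := by
      have h2 := (ha s hsS).2
      have h3 := hq.two_le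
      omega
    obtain ⟨y, hy⟩ := aux_descent q (a s) N hq (ha s hsS).1 hlt hN s x hsu hx
    exact ⟨s, by simpa using hsS, y, hy⟩
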